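/- If transactions form po-convex blocks, i.e. po_T ⊆ po, then si-hb ⊆ rsi-hb. Consequently, if rsi-hb|loc ∪ mo ∪ fr is acyclic, then si-hb is irreflexive. -/

import Mathlib

variable {E : Type*} {TxId : Type*} {Loc : Type*}

/-- Same-transaction relation: both events are transactional with equal transaction ids. -/
def St (tx : E → Option TxId) : E → E → Prop :=
  fun a b => ∃ t, tx a = some t ∧ tx b = some t

/-- Transaction lifting `r_T := st ; (r \ st) ; st`. -/
def RLift (tx : E → Option TxId) (r : E → E → Prop) : E → E → Prop :=
  fun a b => ∃ c d, St tx a c ∧ r c d ∧ ¬ St tx c d ∧ St tx d b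

/-- Reads-before relation `fr := (rf⁻¹ ; mo) \ id`. -/
def Fr (rf mo : E → E → Prop) : E → E → Prop :=
  fun a b => (∃ w, rf w a ∧ mo w b) ∧ a ≠ b

/-- Externally-reading reads: `toutR := codom (rf \ st)`. -/
def ToutR (tx : E → Option TxId) (rf : E → E → Prop) : Set E :=
  { b | ∃ a, rf a b ∧ ¬ St tx a b }

/-- `si-rb := [toutR] ; fr_T ; [W]`. -/
def SiRb (tx : E → Option TxId) (W : Set E) (rf mo : E → E → Prop) : E → E → Prop :=
  fun a b => a ∈ ToutR tx rf ∧ RLift tx (Fr rf mo) a b ∧ b ∈ W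

/-- SI happens-before: `si-hb := (po_T ∪ rf_T ∪ mo_T ∪ si-rb)⁺`. -/
def SiHb (tx : E → Option TxId) (W : Set E) (po rf mo : E → E → Prop) : E → E → Prop :=
  Relation.TransGen (fun a b =>
    RLift tx po a b ∨ RLift tx rf a b ∨ RLift tx mo a b ∨ SiRb tx W rf mo a b)

/-- Non-transactional events. -/
def NTset (tx : E → Option TxId) : Set E := { e | tx e = none }

/-- `rsi-po := (po \ po_i) ∪ ([W] ; po_i ; [W])`. -/
def RsiPo (tx : E → Option TxId) (W : Set E) (po : E → E → Prop) : E → E → Prop :=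
  fun a b => (po a b ∧ ¬ St tx a b) ∨ (a ∈ W ∧ (po a b ∧ St tx a b) ∧ b ∈ W)

/-- `rsi-rf := (rf ; [NT]) ∪ ([NT] ; rf ; st) ∪ rf_T ∪ (mo ; rf)_T`. -/
def RsiRf (tx : E → Option TxId) (rf mo : E → E → Prop) : E → E → Prop :=
  fun a b =>
    (rf a b ∧ b ∈ NTset tx) ∨
    (a ∈ NTset tx ∧ ∃ c, rf a c ∧ St tx c b) ∨
    RLift tx rf a b ∨
    RLift tx (fun x y => ∃ z, mo x z ∧ rf z y) a b

/-- RSI happens-before: `rsi-hb := (rsi-po ∪ rsi-rf ∪ mo_T ∪ si-rb)⁺`. -/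
def RsiHb (tx : E → Option TxId) (W : Set E) (po rf mo : E → E → Prop) : E → E → Prop :=
  Relation.TransGen (fun a b =>
    RsiPo tx W po a b ∨ RsiRf tx rf mo a b ∨ RLift tx mo a b ∨ SiRb tx W rf mo a b)

/-- Internal consistency axiom: `rf_i ∪ mo_i ∪ fr_i ⊆ po`. -/
def INTax (tx : E → Option TxId) (po rf mo : E → E → Prop) : Prop :=
  ∀ a b, (rf a b ∨ mo a b ∨ Fr rf mo a b) → St tx a b → po a b

/-- Acyclicity: the transitive closure is irreflexive. -/
def Acyclic (r : E → E → Prop) : Prop := ∀ a, ¬ Relation.TransGen r a a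

/-- SI-consistency: INT together with acyclicity of `(po_T ∪ rf_T ∪ mo_T) ; fr_T^?`. -/
def SIConsistent (tx : E → Option TxId) (po rf mo : E → E → Prop) : Prop :=
  INTax tx po rf mo ∧
  Acyclic (fun a c => ∃ b,
    (RLift tx po a b ∨ RLift tx rf a b ∨ RLift tx mo a b) ∧
    (RLift tx (Fr rf mo) b c ∨ b = c))

/-- RSI-consistency: INT together with acyclicity of `rsi-hb|loc ∪ mo ∪ fr`. -/
def RSIConsistent (tx : E → Option TxId) (W : Set E) (loc : E → Loc)
    (po rf mo : E → E → Prop) : Prop :=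
  INTax tx po rf mo ∧
  Acyclic (fun a b =>
    (RsiHb tx W po rf mo a b ∧ loc a = loc b) ∨ mo a b ∨ Fr rf mo a b)

/-- if transactions form po-convex blocks (`po_T ⊆ po`) then
`si-hb ⊆ rsi-hb`; consequently, if `rsi-hb|loc ∪ mo ∪ fr` is acyclic then `si-hb` is
irreflexive. -/
theorem stmt10 {E TxId Loc : Type*} (R W : Set E) (loc : E → Loc)
    (tx : E → Option TxId) (po rf mo : E → E → Prop)
    (hconv : ∀ a b, RLift tx po a b → po a b) :
    (∀ a b, SiHb tx W po rf mo a b → RsiHb tx W po rf mo a b) ∧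
    (Acyclic (fun a b =>
        (RsiHb tx W po rf mo a b ∧ loc a = loc b) ∨ mo a b ∨ Fr rf mo a b) →
      Irreflexive (SiHb tx W po rf mo)) := by
  have hmono : ∀ a b, (RLift tx po a b ∨ RLift tx rf a b ∨ RLift tx mo a b ∨
      SiRb tx W rf mo a b) →
      (RsiPo tx W po a b ∨ RsiRf tx rf mo a b ∨ RLift tx mo a b ∨ SiRb tx W rf mo a b) := by
    rintro a b (h | h | h | h)
    · left
      obtain ⟨c, d, ⟨t, hac, hca⟩, hcd, hncd, ⟨t', hdt, hbt⟩⟩ := h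
      refine Or.inl ⟨hconv a b ⟨c, d, ⟨t, hac, hca⟩, hcd, hncd, ⟨t', hdt, hbt⟩⟩, ?_⟩
      rintro ⟨u, hau, hbu⟩
      apply hncd
      exact ⟨u, hca.trans (hac.symm.trans hau), hdt.trans (hbt.symm.trans hbu)⟩
    · exact Or.inr (Or.inl (Or.inr (Or.inr (Or.inl h))))
    · exact Or.inr (Or.inr (Or.inl h))
    · exact Or.inr (Or.inr (Or.inr h))
  have hsub : ∀ a b, SiHb tx W po rf mo a b → RsiHb tx W po rf mo a b := by
    intro a b h
    exact Relation.TransGen.mono (fun x y hxy => hmono x y hxy) a b h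
  refine ⟨hsub, ?_⟩
  intro hacyc a ha
  exact hacyc a (Relation.TransGen.single (Or.inl ⟨hsub a a ha, rfl⟩))
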